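/- Let 𝔤 be a finite-dimensional simple Lie algebra over an algebraically closed field of characteristic 0, and let σ: 𝔤→𝔤 be a linear map satisfying [σ(x),x]=0 for all x∈𝔤. Then σ is a scalar multiple of the identity. -/

import Mathlib

namespace BenoistAux

open LieAlgebra LinearMap Module Filter

section Basic

variable {K : Type*} [Field K] {L : Type*} [LieRing L] [LieAlgebra K L]



/-- The "symmetric w.r.t. the bracket" property. -/
def Sp (τ : L →ₗ[K] L) : Prop := ∀ x y : L, ⁅τ x, y⁆ = ⁅x, τ y⁆

lemma sp_smul {τ : L →ₗ[K] L} (hτ : Sp τ) (c : K) : Sp (c • τ) := by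
  intro x y
  simp only [LinearMap.smul_apply, smul_lie, lie_smul, hτ x y]

lemma sp_sub {τ ρ : L →ₗ[K] L} (hτ : Sp τ) (hρ : Sp ρ) : Sp (τ - ρ) := by
  intro x y
  simp only [LinearMap.sub_apply, sub_lie, lie_sub, hτ x y, hρ x y]

lemma sp_one : Sp (1 : L →ₗ[K] L) := fun _ _ => rfl

lemma sp_comp {τ ρ : L →ₗ[K] L} (hτ : Sp τ) (hρ : Sp ρ)
    (h : τ ∘ₗ ρ = ρ ∘ₗ τ) : Sp (τ ∘ₗ ρ) := by
  intro x y
  calc ⁅τ (ρ x), y⁆ = ⁅ρ x, τ y⁆ := hτ _ _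
    _ = ⁅x, ρ (τ y)⁆ := hρ _ _
    _ = ⁅x, τ (ρ y)⁆ := by
        have := LinearMap.congr_fun h y
        simp only [LinearMap.comp_apply] at this
        rw [← this]

lemma sp_pow {τ : L →ₗ[K] L} (hτ : Sp τ) (n : ℕ) : Sp (τ ^ n) := by
  induction n with
  | zero => simpa [pow_zero] using (sp_one : Sp (1 : L →ₗ[K] L))
  | succ n ih =>
      have h : τ ^ (n + 1) = (τ ^ n) ∘ₗ τ := by
        rw [pow_succ]; rfl
      rw [h]
      exact sp_comp ih hτ (by
        have : (τ ^ n) * τ = τ * (τ ^ n) := (Commute.pow_self τ n).symm ▸ rfl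
        calc (τ ^ n) ∘ₗ τ = (τ ^ n) * τ := rfl
          _ = τ * (τ ^ n) := by rw [← pow_succ, ← pow_succ']
          _ = τ ∘ₗ (τ ^ n) := rfl)

/-- In a simple Lie algebra, the center is trivial. -/
lemma eq_zero_of_central [LieAlgebra.IsSimple K L] (z : L)
    (h : ∀ x : L, ⁅x, z⁆ = 0) : z = 0 := by
  have hz : z ∈ LieAlgebra.center K L := (LieModule.mem_maxTrivSubmodule K L L z).2 h
  rw [LieAlgebra.center_eq_bot K L] at hz
  simpa using hz

lemma nontrivial_of_simple [LieAlgebra.IsSimple K L] : Nontrivial L := by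
  by_contra h
  rw [not_nontrivial_iff_subsingleton] at h
  exact LieAlgebra.IsSimple.non_abelian (R := K) (L := L)
    ⟨fun x m => Subsingleton.elim _ _⟩



/-- If a simple Lie algebra is spanned by two subspaces with `⁅V, U⁆ = 0` and `V ≠ ⊥`,
then `U = ⊥`. -/
lemma eq_bot_of_compl_commuting [LieAlgebra.IsSimple K L]
    (V U : Submodule K L) (hsup : V ⊔ U = ⊤)
    (hvu : ∀ v ∈ V, ∀ u ∈ U, ⁅v, u⁆ = 0) (hV : V ≠ ⊥) : U = ⊥ := by
  classical
  -- U' : the Lie subalgebra generated by U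
  set U' : LieSubalgebra K L := LieSubalgebra.lieSpan K L (U : Set L) with hU'
  -- every element of V centralizes U'
  have hVU' : ∀ v ∈ V, ∀ u ∈ U', ⁅v, u⁆ = 0 := by
    intro v hv
    -- the centralizer of v is a Lie subalgebra containing U
    let C : LieSubalgebra K L :=
      { carrier := {w : L | ⁅v, w⁆ = 0}
        add_mem' := fun {a b} ha hb => by
          simp only [Set.mem_setOf_eq] at *
          rw [lie_add, ha, hb, add_zero]
        zero_mem' := by simp
        smul_mem' := fun c {a} ha => by
          simp only [Set.mem_setOf_eq] at *
          rw [lie_smul, ha, smul_zero]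
        lie_mem' := fun {a b} ha hb => by
          simp only [Set.mem_setOf_eq] at *
          rw [leibniz_lie, ha, hb, zero_lie, lie_zero, add_zero] }
    have hUC : (U : Set L) ⊆ C := fun u hu => hvu v hv u hu
    have hspan : U' ≤ C := LieSubalgebra.lieSpan_le.2 hUC
    intro u hu
    exact hspan hu
  -- membership of arbitrary x in U' is preserved by brackets with U'
  have hU'lie : ∀ x : L, ∀ u ∈ U', ⁅x, u⁆ ∈ U' := by
    intro x u hu
    obtain ⟨v, hv, w, hw, rfl⟩ := Submodule.mem_sup.1 (hsup ▸ Submodule.mem_top (x := x))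
    rw [add_lie]
    rw [hVU' v hv u hu]
    rw [zero_add]
    exact U'.lie_mem (LieSubalgebra.subset_lieSpan hw) hu
  -- N : the centralizer of U' is a Lie ideal
  let Nsub : Submodule K L :=
    { carrier := {x : L | ∀ u ∈ U', ⁅x, u⁆ = 0}
      add_mem' := fun {a b} ha hb => by
        intro u hu; rw [add_lie, ha u hu, hb u hu, add_zero]
      zero_mem' := by intro u hu; simp
      smul_mem' := fun c {a} ha => by
        intro u hu; rw [smul_lie, ha u hu, smul_zero] }
  let N : LieIdeal K L :=
    { Nsub with
      lie_mem := by
        intro x c hc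
        intro u hu
        have h1 : ⁅c, u⁆ = 0 := hc u hu
        have h2 : ⁅c, ⁅x, u⁆⁆ = 0 := hc _ (hU'lie x u hu)
        calc ⁅⁅x, c⁆, u⁆ = ⁅x, ⁅c, u⁆⁆ - ⁅c, ⁅x, u⁆⁆ := by rw [lie_lie]
          _ = 0 := by rw [h1, h2, lie_zero, sub_zero] }
  have hVN : V ≤ Nsub := fun v hv => by intro u hu; exact hVU' v hv u hu
  have hNne : N ≠ ⊥ := by
    intro hbot
    apply hV
    rw [eq_bot_iff]
    intro v hv
    have : v ∈ N := hVN hv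
    rw [hbot] at this
    simpa using this
  have hNtop : N = ⊤ := (LieAlgebra.IsSimple.eq_bot_or_eq_top N).resolve_left hNne
  -- hence every element of U' is central
  have hU'c : ∀ u ∈ U', u = 0 := by
    intro u hu
    apply eq_zero_of_central (K := K) u
    intro x
    have hx : x ∈ N := hNtop ▸ LieSubmodule.mem_top x
    exact hx u hu
  rw [eq_bot_iff]
  intro u hu
  simpa using hU'c u (LieSubalgebra.subset_lieSpan hu)


/-- Polarization: `⁅σ x, x⁆ = 0` for all `x` implies `Sp σ`. -/
lemma sp_of_commuting (σ : L →ₗ[K] L) (hσ : ∀ x : L, ⁅σ x, x⁆ = 0) : Sp σ := by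
  intro x y
  have h := hσ (x + y)
  rw [map_add, add_lie, lie_add, lie_add, hσ x, hσ y] at h
  have h2 : ⁅σ x, y⁆ + ⁅σ y, x⁆ = 0 := by
    rw [zero_add, add_zero] at h
    exact h
  have h3 : ⁅σ y, x⁆ = -⁅x, σ y⁆ := by rw [← lie_skew]
  rw [h3] at h2
  exact add_neg_eq_zero.1 h2

/-- `Sp` is preserved by commutators with adjoint maps. -/
lemma sp_comm_ad {τ : L →ₗ[K] L} (hτ : Sp τ) (x : L) :
    Sp (τ ∘ₗ (LieAlgebra.ad K L x) - (LieAlgebra.ad K L x) ∘ₗ τ) := by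
  intro y z
  simp only [LinearMap.sub_apply, LinearMap.comp_apply, LieAlgebra.ad_apply]
  rw [sub_lie, lie_sub]
  have h1 : ⁅τ ⁅x, y⁆, z⁆ = ⁅⁅x, y⁆, τ z⁆ := hτ _ _
  have h2 : ⁅⁅x, y⁆, τ z⁆ = ⁅x, ⁅y, τ z⁆⁆ - ⁅y, ⁅x, τ z⁆⁆ := lie_lie _ _ _
  have h3 : ⁅⁅x, τ y⁆, z⁆ = ⁅x, ⁅τ y, z⁆⁆ - ⁅τ y, ⁅x, z⁆⁆ := lie_lie _ _ _
  have h4 : ⁅τ y, z⁆ = ⁅y, τ z⁆ := hτ _ _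
  have h5 : ⁅τ y, ⁅x, z⁆⁆ = ⁅y, τ ⁅x, z⁆⁆ := hτ _ _
  rw [h1, h2, h3, h4, h5]
  abel

/-- An `Sp` map whose range lies in a line is zero (in a simple Lie algebra over a field of
characteristic zero). -/
lemma sp_rank_one_kill [LieAlgebra.IsSimple K L] [CharZero K]
    {m : L →ₗ[K] L} (hm : Sp m) (y₀ : L) (h : ∀ z, ∃ c : K, m z = c • m y₀) :
    m y₀ = 0 := by
  by_contra hne
  -- first : ⁅m y₀, y₀⁆ = 0
  have h0 : ⁅m y₀, y₀⁆ = 0 := by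
    have h1 : ⁅m y₀, y₀⁆ = ⁅y₀, m y₀⁆ := hm y₀ y₀
    have h2 : ⁅y₀, m y₀⁆ = -⁅m y₀, y₀⁆ := by rw [← lie_skew]
    have : (2 : K) • ⁅m y₀, y₀⁆ = 0 := by
      rw [two_smul]
      nth_rewrite 2 [h1]
      rw [h2, add_neg_cancel]
    exact (smul_eq_zero.1 this).resolve_left (by norm_num)
  -- m y₀ is central
  apply hne
  apply eq_zero_of_central (K := K) (m y₀)
  intro z
  have h1 : ⁅z, m y₀⁆ = ⁅m z, y₀⁆ := (hm z y₀).symm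
  obtain ⟨c, hc⟩ := h z
  rw [h1, hc, smul_lie, h0, smul_zero]


end Basic

section Main

variable {K : Type*} [Field K] [IsAlgClosed K] [CharZero K]
  {L : Type*} [LieRing L] [LieAlgebra K L] [FiniteDimensional K L]
  [LieAlgebra.IsSimple K L]

/-- Every `Sp` endomorphism of a f.d. simple Lie algebra over an alg. closed field is
scalar plus nilpotent. -/
lemma exists_scalar_nilpotent (τ : L →ₗ[K] L) (hτ : Sp τ) :
    ∃ c : K, IsNilpotent (τ - c • (1 : L →ₗ[K] L)) := by
  haveI : Nontrivial L := nontrivial_of_simple (K := K) (L := L)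
  obtain ⟨c, hc⟩ := Module.End.exists_eigenvalue (τ : Module.End K L)
  obtain ⟨v, hv⟩ := hc.exists_hasEigenvector
  refine ⟨c, ?_⟩
  set f : L →ₗ[K] L := τ - c • (1 : L →ₗ[K] L) with hf
  have hfS : Sp f := sp_sub hτ (sp_smul sp_one c)
  have hfv : f v = 0 := by
    have := hv.apply_eq_smul
    simp [hf, this]
  -- Fitting decomposition
  obtain ⟨N₀, hN₀⟩ := eventually_atTop.1 (f.eventually_isCompl_ker_pow_range_pow)
  set N := max N₀ 1 with hN
  have hcompl : IsCompl (LinearMap.ker (f ^ N)) (LinearMap.range (f ^ N)) :=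
    hN₀ N (le_max_left _ _)
  have hkerne : LinearMap.ker (f ^ N) ≠ ⊥ := by
    intro hbot
    have hvk : v ∈ LinearMap.ker (f ^ N) := by
      rw [LinearMap.mem_ker]
      obtain ⟨M, hM⟩ : ∃ M, N = M + 1 :=
        ⟨N - 1, by have : 1 ≤ N := le_max_right N₀ 1; omega⟩
      rw [hM, pow_succ, Module.End.mul_apply, hfv, map_zero]
    rw [hbot] at hvk
    exact hv.right (by simpa using hvk)
  have hbr : ∀ x ∈ LinearMap.ker (f ^ N), ∀ u ∈ LinearMap.range (f ^ N), ⁅x, u⁆ = 0 := by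
    rintro x hx u ⟨y, rfl⟩
    have : ⁅(f ^ N) x, y⁆ = ⁅x, (f ^ N) y⁆ := sp_pow hfS N x y
    rw [← this, LinearMap.mem_ker.1 hx, zero_lie]
  have hrb : LinearMap.range (f ^ N) = ⊥ :=
    eq_bot_of_compl_commuting _ _ (by rw [codisjoint_iff.1 hcompl.codisjoint]) hbr hkerne
  exact ⟨N, LinearMap.range_eq_bot.1 hrb⟩

/-- A traceless `Sp` endomorphism is nilpotent. -/
lemma isNilpotent_of_trace_zero (τ : L →ₗ[K] L) (hτ : Sp τ)
    (htr : LinearMap.trace K L τ = 0) : IsNilpotent τ := by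
  haveI : Nontrivial L := nontrivial_of_simple (K := K) (L := L)
  obtain ⟨c, hc⟩ := exists_scalar_nilpotent τ hτ
  have htrn : LinearMap.trace K L (τ - c • (1 : L →ₗ[K] L)) = 0 :=
    (LinearMap.isNilpotent_trace_of_isNilpotent hc).eq_zero
  have h1 : LinearMap.trace K L (c • (1 : L →ₗ[K] L)) = c * (Module.finrank K L : K) := by
    rw [map_smul]
    have : LinearMap.trace K L (1 : L →ₗ[K] L) = (Module.finrank K L : K) := by
      simpa using LinearMap.trace_id K L
    rw [this, smul_eq_mul]
  have hc0 : c = 0 := by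
    have h2 : c * (Module.finrank K L : K) = 0 := by
      have := htrn
      rw [map_sub, htr, h1, zero_sub, neg_eq_zero] at this
      exact this
    rcases mul_eq_zero.1 h2 with h | h
    · exact h
    · exfalso
      have hpos : 0 < Module.finrank K L := Module.finrank_pos
      exact Nat.cast_ne_zero.2 hpos.ne' h
  rw [hc0] at hc
  simpa using hc


set_option maxHeartbeats 1000000 in
/-- A nilpotent `Sp` endomorphism of a f.d. simple Lie algebra is zero. -/
lemma sp_nilpotent_eq_zero (m₀ : L →ₗ[K] L) (hm₀ : Sp m₀) (hnil₀ : IsNilpotent m₀) :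
    m₀ = 0 := by
  classical
  by_contra hne₀
  set P : ℕ → Prop := fun n => ∃ τ : L →ₗ[K] L, Sp τ ∧ IsNilpotent τ ∧ τ ≠ 0 ∧
    Module.finrank K (LinearMap.range τ) = n with hP
  have hPex : ∃ n, P n := ⟨_, m₀, hm₀, hnil₀, hne₀, rfl⟩
  set r := Nat.find hPex with hr
  obtain ⟨m, hm, hnil, hne, hrank⟩ := Nat.find_spec hPex
  -- minimality
  have hminlt : ∀ g : L →ₗ[K] L, Sp g → IsNilpotent g →
      Module.finrank K (LinearMap.range g) < r → g = 0 := by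
    intro g hg hgn hlt
    by_contra hg0
    exact Nat.find_min hPex hlt ⟨g, hg, hgn, hg0, rfl⟩
  -- m ∘ₗ m = 0
  have hmm : m ∘ₗ m = 0 := by
    by_contra hmm0
    have hS2 : Sp (m ∘ₗ m) := by
      intro x y
      calc ⁅m (m x), y⁆ = ⁅m x, m y⁆ := hm _ _
        _ = ⁅x, m (m y)⁆ := hm _ _
    have hnil2 : IsNilpotent (m ∘ₗ m) := by
      obtain ⟨k, hk⟩ := hnil
      exact ⟨k, by
        have : (m ∘ₗ m) ^ k = m ^ k * m ^ k := by
          show (m * m) ^ k = m ^ k * m ^ k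
          rw [← pow_add, ← two_mul, pow_mul, pow_two]
        rw [this, hk, zero_mul]⟩
    have hle : LinearMap.range (m ∘ₗ m) ≤ LinearMap.range m := LinearMap.range_comp_le_range _ _
    have hnelt : LinearMap.range (m ∘ₗ m) ≠ LinearMap.range m := by
      intro heq
      have hstab : ∀ k : ℕ, LinearMap.range (m ^ (k + 1)) = LinearMap.range m := by
        intro k
        induction k with
        | zero => rw [pow_one]
        | succ k ih =>
            have h1 : m ^ (k + 2) = m ∘ₗ m ^ (k + 1) := by
              show m ^ (k + 2) = m * m ^ (k+1)
              rw [← pow_succ']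
            rw [h1, LinearMap.range_comp, ih, ← LinearMap.range_comp, heq]
      obtain ⟨k, hk⟩ := hnil
      have hk1 : LinearMap.range (m ^ (k + 1)) = ⊥ := by
        rw [pow_succ, hk, zero_mul, LinearMap.range_zero]
      rw [hstab k] at hk1
      exact hne (LinearMap.range_eq_bot.1 hk1)
    have hlt : Module.finrank K (LinearMap.range (m ∘ₗ m)) < r := by
      rw [hr, ← hrank]
      exact Submodule.finrank_lt_finrank_of_lt (lt_of_le_of_ne hle hnelt)
    exact hmm0 (hminlt _ hS2 hnil2 hlt)
  have hmzero : ∀ z, m (m z) = 0 := fun z => by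
    have := LinearMap.ext_iff.1 hmm z
    simpa using this
  set V := LinearMap.ker m with hV
  set R := LinearMap.range m with hR
  have hRV : R ≤ V := by
    rintro _ ⟨z, rfl⟩
    exact LinearMap.mem_ker.2 (hmzero z)
  have hVR : ∀ v ∈ V, ∀ z : L, ⁅v, m z⁆ = 0 := by
    intro v hv z
    rw [← hm v z, LinearMap.mem_ker.1 hv, zero_lie]
  have hVmul : ∀ x ∈ V, ∀ y ∈ V, m ⁅x, y⁆ = 0 := by
    intro x hx y hy
    apply eq_zero_of_central (K := K)
    intro z
    have h1 : ⁅z, m ⁅x, y⁆⁆ = -⁅m ⁅x,y⁆, z⁆ := by rw [← lie_skew]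
    have h2 : ⁅m ⁅x,y⁆, z⁆ = ⁅⁅x,y⁆, m z⁆ := hm _ _
    have h3 : ⁅m z, ⁅x, y⁆⁆ = 0 := by
      rw [leibniz_lie]
      have hzx : ⁅m z, x⁆ = 0 := by
        have := hVR x hx z
        rw [← neg_eq_zero, lie_skew] at this
        exact this
      have hzy : ⁅m z, y⁆ = 0 := by
        have := hVR y hy z
        rw [← neg_eq_zero, lie_skew] at this
        exact this
      rw [hzx, hzy, zero_lie, lie_zero, add_zero]
    have h4 : ⁅⁅x,y⁆, m z⁆ = 0 := by
      rw [← neg_eq_zero, lie_skew, h3]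
    rw [h1, h2, h4, neg_zero]
  have hVne_top : V ≠ ⊤ := fun h => hne (LinearMap.ker_eq_top.1 h)
  have hRne_bot : R ≠ ⊥ := fun h => hne (LinearMap.range_eq_bot.1 h)
  have hVne_bot : V ≠ ⊥ := by
    intro h
    apply hRne_bot
    rw [eq_bot_iff]
    exact h ▸ hRV
  have hadVm : ∀ v ∈ V, (LieAlgebra.ad K L v) ∘ₗ m = 0 := by
    intro v hv
    ext z
    simpa [LieAlgebra.ad_apply] using hVR v hv z
  have hSpmad : ∀ v ∈ V, Sp (m ∘ₗ LieAlgebra.ad K L v) := by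
    intro v hv
    have h := sp_comm_ad hm v
    rw [hadVm v hv, sub_zero] at h
    exact h
  have htrmad : ∀ v ∈ V, LinearMap.trace K L (m ∘ₗ LieAlgebra.ad K L v) = 0 := by
    intro v hv
    rw [LinearMap.trace_comp_comm', hadVm v hv, map_zero]
  have hnilmad : ∀ v ∈ V, IsNilpotent (m ∘ₗ LieAlgebra.ad K L v) := fun v hv =>
    isNilpotent_of_trace_zero _ (hSpmad v hv) (htrmad v hv)
  have hkermad : ∀ v ∈ V, V ≤ LinearMap.ker (m ∘ₗ LieAlgebra.ad K L v) := by
    intro v hv v' hv'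
    rw [LinearMap.mem_ker, LinearMap.comp_apply, LieAlgebra.ad_apply]
    exact hVmul v hv v' hv'
  -- kernels of nonzero nilpotent Sp maps vanishing on V equal V
  have hkerEq : ∀ g : L →ₗ[K] L, Sp g → IsNilpotent g → g ≠ 0 →
      V ≤ LinearMap.ker g → LinearMap.ker g = V := by
    intro g hg hgn hg0 hVg
    have hge : r ≤ Module.finrank K (LinearMap.range g) := by
      by_contra hlt
      exact hg0 (hminlt g hg hgn (by omega))
    have e1 := LinearMap.finrank_range_add_finrank_ker m
    have e2 := LinearMap.finrank_range_add_finrank_ker g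
    rw [← hV] at e1
    have hkle : Module.finrank K (LinearMap.ker g) ≤ Module.finrank K V := by
      rw [← hR, hrank] at e1
      omega
    exact (Submodule.eq_of_le_of_finrank_le hVg hkle).symm
  -- existence of v₁
  have hv₁ : ∃ v₁ ∈ V, m ∘ₗ LieAlgebra.ad K L v₁ ≠ 0 := by
    by_contra hcon
    push_neg at hcon
    let VI : LieIdeal K L :=
      { (V : Submodule K L) with
        lie_mem := by
          intro x p hp
          have hp' : p ∈ V := hp
          show ⁅x, p⁆ ∈ V
          rw [LinearMap.mem_ker]
          have h1 : ⁅x, p⁆ = -⁅p, x⁆ := by rw [← lie_skew]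
          rw [h1, map_neg, neg_eq_zero]
          have := LinearMap.ext_iff.1 (hcon p hp') x
          simpa [LieAlgebra.ad_apply] using this }
    rcases LieAlgebra.IsSimple.eq_bot_or_eq_top VI with h | h
    · apply hVne_bot
      rw [eq_bot_iff]
      intro v hv
      have : v ∈ VI := hv
      rw [h] at this
      simpa using this
    · apply hVne_top
      rw [eq_top_iff]
      intro z _
      have : z ∈ VI := h ▸ LieSubmodule.mem_top z
      exact this
  obtain ⟨v₁, hv₁V, hφne⟩ := hv₁
  set φ := m ∘ₗ LieAlgebra.ad K L v₁ with hφ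
  have hφS : Sp φ := hSpmad v₁ hv₁V
  have hφnil : IsNilpotent φ := hnilmad v₁ hv₁V
  have hkerφ : LinearMap.ker φ = V := hkerEq φ hφS hφnil hφne (hkermad v₁ hv₁V)
  have hrangeφ : LinearMap.range φ = R := by
    have hle' : LinearMap.range φ ≤ R := by
      rw [hφ, hR]; exact LinearMap.range_comp_le_range _ _
    apply Submodule.eq_of_le_of_finrank_le hle'
    have e1 := LinearMap.finrank_range_add_finrank_ker m
    have e2 := LinearMap.finrank_range_add_finrank_ker φ
    rw [← hV, ← hR] at e1
    rw [hkerφ] at e2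
    omega
  -- scalar representation of m ∘ ad v
  have hscal : ∀ v ∈ V, ∃ c : K, m ∘ₗ LieAlgebra.ad K L v = c • φ := by
    intro v hv
    set ψ := m ∘ₗ LieAlgebra.ad K L v with hψ
    haveI : Nontrivial (L ⧸ V) :=
      Submodule.Quotient.nontrivial_iff.2 (lt_top_iff_ne_top.2 hVne_top).ne
    have hψker : V ≤ LinearMap.ker ψ := hkermad v hv
    have hφker : V ≤ LinearMap.ker φ := le_of_eq hkerφ.symm
    set ψq : (L ⧸ V) →ₗ[K] L := V.liftQ ψ hψker with hψq
    set φq : (L ⧸ V) →ₗ[K] L := V.liftQ φ hφker with hφq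
    have hφqinj : Function.Injective φq := by
      rw [← LinearMap.ker_eq_bot]
      exact Submodule.ker_liftQ_eq_bot _ _ _ (le_of_eq hkerφ)
    have hrange : ∀ w : L ⧸ V, ψq w ∈ LinearMap.range φq := by
      intro w
      obtain ⟨z, rfl⟩ := V.mkQ_surjective w
      have h1 : ψq (V.mkQ z) = ψ z := by
        simp [hψq, Submodule.mkQ_apply, Submodule.liftQ_apply]
      rw [h1]
      have h2 : ψ z ∈ R := ⟨⁅v, z⁆, by simp [hψ, LieAlgebra.ad_apply]⟩
      rw [← hrangeφ] at h2
      obtain ⟨y, hy⟩ := h2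
      exact ⟨V.mkQ y, by simp [hφq, Submodule.mkQ_apply, Submodule.liftQ_apply, hy]⟩
    set e := LinearEquiv.ofInjective φq hφqinj with he
    set C : Module.End K (L ⧸ V) :=
      e.symm.toLinearMap ∘ₗ (ψq.codRestrict (LinearMap.range φq) hrange) with hC
    obtain ⟨t₀, ht₀⟩ := Module.End.exists_eigenvalue C
    obtain ⟨w, hw⟩ := ht₀.exists_hasEigenvector
    have hCw : ∀ w' : L ⧸ V, φq (C w') = ψq w' := by
      intro w'
      have h1 : φq (e.symm (ψq.codRestrict (LinearMap.range φq) hrange w'))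
          = ψq w' := by
        have h2 := e.apply_symm_apply (ψq.codRestrict (LinearMap.range φq) hrange w')
        have h3 : (e (e.symm (ψq.codRestrict (LinearMap.range φq) hrange w')) : L)
            = φq (e.symm (ψq.codRestrict (LinearMap.range φq) hrange w')) :=
          LinearEquiv.ofInjective_apply _ _
        rw [h2] at h3
        rw [← h3]
        simp [LinearMap.codRestrict_apply]
      simpa [hC] using h1
    have heig : ψq w = t₀ • φq w := by
      rw [← hCw w, hw.apply_eq_smul, map_smul]
    obtain ⟨z, rfl⟩ := V.mkQ_surjective w
    set g := ψ - t₀ • φ with hg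
    have hgS : Sp g := sp_sub (hSpmad v hv) (sp_smul hφS t₀)
    have hgtr : LinearMap.trace K L g = 0 := by
      rw [hg, map_sub, map_smul, htrmad v hv, htrmad v₁ hv₁V, smul_zero, sub_zero]
    have hgnil : IsNilpotent g := isNilpotent_of_trace_zero g hgS hgtr
    have hgker : V ≤ LinearMap.ker g := by
      intro v' hv'
      rw [LinearMap.mem_ker, hg, LinearMap.sub_apply, LinearMap.smul_apply,
        LinearMap.mem_ker.1 (hψker hv'), LinearMap.mem_ker.1 (hφker hv'),
        smul_zero, sub_zero]
    have hgz : g z = 0 := by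
      have h1 : ψ z = t₀ • φ z := by
        have h2 : ψq (V.mkQ z) = ψ z := by
          simp [hψq, Submodule.mkQ_apply, Submodule.liftQ_apply]
        have h3 : φq (V.mkQ z) = φ z := by
          simp [hφq, Submodule.mkQ_apply, Submodule.liftQ_apply]
        rw [← h2, ← h3, heig]
      rw [hg, LinearMap.sub_apply, LinearMap.smul_apply, h1, sub_self]
    by_cases hg0 : g = 0
    · refine ⟨t₀, ?_⟩
      rw [← sub_eq_zero]
      exact hg0
    · exfalso
      have hkerg : LinearMap.ker g = V := hkerEq g hgS hgnil hg0 hgker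
      have hzV : z ∈ V := hkerg ▸ LinearMap.mem_ker.2 hgz
      apply hw.right
      rw [← Submodule.Quotient.mk_eq_zero V] at hzV
      exact hzV
  -- m ∘ ad w = 0 for w in the range of m
  have hR₀ : ∀ x : L, m ∘ₗ LieAlgebra.ad K L (m x) = 0 := by
    intro x
    set w := m x with hw
    have hwV : w ∈ V := hRV ⟨x, rfl⟩
    obtain ⟨c, hc⟩ := hscal w hwV
    by_cases hc0 : c = 0
    · rw [hc, hc0, zero_smul]
    exfalso
    set e : L →ₗ[K] L := m ∘ₗ LieAlgebra.ad K L x - LieAlgebra.ad K L x ∘ₗ m with hedef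
    have heS : Sp e := sp_comm_ad hm x
    have hetr : LinearMap.trace K L e = 0 := by
      rw [hedef, map_sub, LinearMap.trace_comp_comm', sub_self]
    obtain ⟨M, hM⟩ := isNilpotent_of_trace_zero e heS hetr
    have happ : ∀ y : L, e y = m ⁅x, y⁆ - ⁅x, m y⁆ := by
      intro y
      simp [hedef, LieAlgebra.ad_apply]
    have hme : ∀ y, m (e y) = -(e (m y)) := by
      intro y
      calc m (e y) = m (m ⁅x, y⁆) - m ⁅x, m y⁆ := by rw [happ y, map_sub]
        _ = -(m ⁅x, m y⁆) := by rw [hmzero, zero_sub]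
        _ = -(e (m y)) := by rw [happ (m y), hmzero, lie_zero, sub_zero]
    have hmej : ∀ (j : ℕ) (y : L), m ((e ^ j) y) = ((-1 : K) ^ j) • (e ^ j) (m y) := by
      intro j
      induction j with
      | zero => intro y; simp
      | succ j ih =>
          intro y
          have h1 : (e ^ (j + 1)) y = (e ^ j) (e y) := by
            rw [pow_succ]; rfl
          have h2 : (e ^ (j + 1)) (m y) = (e ^ j) (e (m y)) := by
            rw [pow_succ]; rfl
          have h3 : (-(1:K)) ^ (j+1) = -((-1:K) ^ j) := by
            rw [pow_succ, mul_neg_one]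
          rw [h1, ih (e y), hme y, map_neg, smul_neg, ← neg_smul, h2, h3]
    have hadw : ∀ y, (LieAlgebra.ad K L w) y = (LieAlgebra.ad K L x) (m y) := by
      intro y
      simp only [LieAlgebra.ad_apply, hw]
      exact hm x y
    have hpow : ∀ (j : ℕ) (y : L), ((LieAlgebra.ad K L w) ^ (j+1)) y
        = (LieAlgebra.ad K L x) ((e ^ j) (m y)) := by
      intro j
      induction j with
      | zero =>
          intro y
          rw [zero_add, pow_one, pow_zero]
          simpa using hadw y
      | succ j ih =>
          intro y
          have h1 : ((LieAlgebra.ad K L w) ^ (j+2)) y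
              = (LieAlgebra.ad K L w) (((LieAlgebra.ad K L w) ^ (j+1)) y) := by
            rw [pow_succ']; rfl
          rw [h1, ih y, hadw]
          congr 1
          have h2 : ∀ t, m ((LieAlgebra.ad K L x) t) = e t + (LieAlgebra.ad K L x) (m t) := by
            intro t
            simp only [LieAlgebra.ad_apply]
            rw [happ t, sub_add_cancel]
          rw [h2]
          have h3 : m ((e ^ j) (m y)) = 0 := by
            rw [hmej j (m y), hmzero, map_zero, smul_zero]
          rw [h3, map_zero, add_zero, ← Module.End.mul_apply, ← pow_succ']
    have hadwnil : ((LieAlgebra.ad K L w) ^ (M+1)) = 0 := by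
      ext y
      rw [LinearMap.zero_apply, hpow M y, hM]
      simp
    have hker_eq : LinearMap.ker (m ∘ₗ LieAlgebra.ad K L w) = V := by
      rw [hc, LinearMap.ker_smul _ c hc0, hkerφ]
    obtain ⟨z₀, hz₀⟩ : ∃ z₀ : L, z₀ ∉ V := by
      by_contra hcon
      push_neg at hcon
      exact hVne_top (eq_top_iff.2 fun z _ => hcon z)
    have hQ : ∃ j : ℕ, ((LieAlgebra.ad K L w) ^ j) z₀ ∈ V := by
      refine ⟨M + 1, ?_⟩
      rw [hadwnil]
      simp
    have hjspec := Nat.find_spec hQ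
    have hj0 : Nat.find hQ ≠ 0 := by
      intro h0
      rw [h0, pow_zero] at hjspec
      simp only [Module.End.one_apply] at hjspec
      exact hz₀ hjspec
    obtain ⟨j', hj'⟩ : ∃ j', Nat.find hQ = j' + 1 := ⟨Nat.find hQ - 1, by omega⟩
    have hz'notV : ((LieAlgebra.ad K L w) ^ j') z₀ ∉ V := Nat.find_min hQ (by omega)
    apply hz'notV
    rw [← hker_eq, LinearMap.mem_ker, LinearMap.comp_apply, LieAlgebra.ad_apply]
    have h1 : ((LieAlgebra.ad K L w) ^ Nat.find hQ) z₀
        = ⁅w, ((LieAlgebra.ad K L w) ^ j') z₀⁆ := by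
      rw [hj', pow_succ']
      simp [Module.End.mul_apply, LieAlgebra.ad_apply]
    rw [hj', pow_succ'] at hjspec
    simp only [Module.End.mul_apply, LieAlgebra.ad_apply] at hjspec
    exact LinearMap.mem_ker.1 hjspec
  -- final case split
  by_cases hA : ∀ p ∈ V, m ∘ₗ LieAlgebra.ad K L p = 0 →
      ∀ y : L, m ∘ₗ LieAlgebra.ad K L ⁅p, y⁆ = 0
  · -- V₀ is a nonzero proper ideal : contradiction
    let V₀sub : Submodule K L :=
      { carrier := {v : L | v ∈ V ∧ m ∘ₗ LieAlgebra.ad K L v = 0}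
        add_mem' := by
          rintro a b ⟨haV, ha0⟩ ⟨hbV, hb0⟩
          refine ⟨V.add_mem haV hbV, ?_⟩
          ext z
          have ha := LinearMap.ext_iff.1 ha0 z
          have hb := LinearMap.ext_iff.1 hb0 z
          simp only [LinearMap.comp_apply, LieAlgebra.ad_apply, LinearMap.zero_apply] at *
          rw [add_lie, map_add, ha, hb, add_zero]
        zero_mem' := by
          refine ⟨V.zero_mem, ?_⟩
          ext z
          simp only [LinearMap.comp_apply, LieAlgebra.ad_apply, LinearMap.zero_apply]
          rw [zero_lie, map_zero]
        smul_mem' := by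
          rintro c a ⟨haV, ha0⟩
          refine ⟨V.smul_mem c haV, ?_⟩
          ext z
          have ha := LinearMap.ext_iff.1 ha0 z
          simp only [LinearMap.comp_apply, LieAlgebra.ad_apply, LinearMap.zero_apply] at *
          rw [smul_lie, map_smul, ha, smul_zero] }
    let V₀ : LieIdeal K L :=
      { V₀sub with
        lie_mem := by
          rintro x p ⟨hpV, hp0⟩
          have h1 : ⁅x, p⁆ = -⁅p, x⁆ := by rw [← lie_skew]
          constructor
          · show ⁅x, p⁆ ∈ V
            rw [LinearMap.mem_ker, h1, map_neg, neg_eq_zero]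
            have := LinearMap.ext_iff.1 hp0 x
            simpa [LieAlgebra.ad_apply] using this
          · show m ∘ₗ LieAlgebra.ad K L ⁅x, p⁆ = 0
            ext z
            have hz := LinearMap.ext_iff.1 (hA p hpV hp0 x) z
            simp only [LinearMap.comp_apply, LieAlgebra.ad_apply, LinearMap.zero_apply] at *
            rw [h1, neg_lie, map_neg, hz, neg_zero] }
    obtain ⟨x₀, hx₀⟩ : ∃ x₀ : L, m x₀ ≠ 0 := by
      by_contra hcon
      push_neg at hcon
      exact hne (LinearMap.ext fun z => by rw [hcon z, LinearMap.zero_apply])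
    have hmx₀ : m x₀ ∈ V₀ := ⟨hRV ⟨x₀, rfl⟩, hR₀ x₀⟩
    rcases LieAlgebra.IsSimple.eq_bot_or_eq_top V₀ with h | h
    · rw [h] at hmx₀
      exact hx₀ (by simpa using hmx₀)
    · apply hVne_top
      rw [eq_top_iff]
      intro z _
      have hz : z ∈ V₀ := h ▸ LieSubmodule.mem_top z
      exact hz.1
  · push_neg at hA
    obtain ⟨p, hpV, hp0, y₀, hy₀⟩ := hA
    have hp0' : ∀ z, m ⁅p, z⁆ = 0 := by
      intro z
      have := LinearMap.ext_iff.1 hp0 z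
      simpa [LieAlgebra.ad_apply] using this
    set u := ⁅p, y₀⁆ with hu
    have huV : u ∈ V := LinearMap.mem_ker.2 (hp0' y₀)
    obtain ⟨cu, hcu⟩ := hscal u huV
    have hcune : cu ≠ 0 := by
      intro h0
      exact hy₀ (by rw [hcu, h0, zero_smul])
    have hkey : ∀ z : L, ∃ d : K, φ z = d • φ y₀ := by
      intro z
      have ht : ⁅p, z⁆ ∈ V := LinearMap.mem_ker.2 (hp0' z)
      obtain ⟨ct, hct⟩ := hscal ⁅p, z⁆ ht
      have h1 : m ⁅u, z⁆ = -m ⁅y₀, ⁅p, z⁆⁆ := by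
        have hll : ⁅u, z⁆ = ⁅p, ⁅y₀, z⁆⁆ - ⁅y₀, ⁅p, z⁆⁆ := lie_lie p y₀ z
        rw [hll, map_sub, hp0' _, zero_sub]
      have h2 : m ⁅y₀, ⁅p, z⁆⁆ = -(ct • (φ y₀)) := by
        have hsk : ⁅y₀, ⁅p, z⁆⁆ = -⁅⁅p, z⁆, y₀⁆ := by rw [← lie_skew]
        rw [hsk, map_neg]
        have h3 : m ⁅⁅p, z⁆, y₀⁆ = (m ∘ₗ LieAlgebra.ad K L ⁅p, z⁆) y₀ := by
          simp [LieAlgebra.ad_apply]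
        rw [h3, hct]
        simp
      have h4 : m ⁅u, z⁆ = cu • φ z := by
        have h5 : m ⁅u, z⁆ = (m ∘ₗ LieAlgebra.ad K L u) z := by
          simp [LieAlgebra.ad_apply]
        rw [h5, hcu]
        simp
      have h6 : cu • φ z = ct • φ y₀ := by
        rw [← h4, h1, h2, neg_neg]
      refine ⟨cu⁻¹ * ct, ?_⟩
      rw [mul_smul, ← h6, ← smul_assoc, smul_eq_mul, inv_mul_cancel₀ hcune, one_smul]
    have hfy₀ : φ y₀ = 0 := sp_rank_one_kill hφS y₀ hkey
    apply hφne
    ext z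
    obtain ⟨d, hd⟩ := hkey z
    rw [LinearMap.zero_apply, hd, hfy₀, smul_zero]


end Main

end BenoistAux

/-- (Benoist's Lemme 2.) If `σ` is a linear endomorphism of a finite-dimensional simple Lie
algebra over an algebraically closed field of characteristic `0` with `[σ(x), x] = 0` for all
`x`, then `σ` is a scalar multiple of the identity. -/
theorem centroid_like_is_scalar
    (K : Type*) [Field K] [IsAlgClosed K] [CharZero K]
    (L : Type*) [LieRing L] [LieAlgebra K L] [FiniteDimensional K L]
    [LieAlgebra.IsSimple K L]
    (σ : L →ₗ[K] L)
    (hσ : ∀ x : L, ⁅σ x, x⁆ = 0) :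
    ∃ c : K, σ = c • LinearMap.id := by
  have hσS : BenoistAux.Sp σ := BenoistAux.sp_of_commuting σ hσ
  obtain ⟨c, hc⟩ := BenoistAux.exists_scalar_nilpotent σ hσS
  have hS' : BenoistAux.Sp (σ - c • (1 : L →ₗ[K] L)) :=
    BenoistAux.sp_sub hσS (BenoistAux.sp_smul BenoistAux.sp_one c)
  have h0 : σ - c • (1 : L →ₗ[K] L) = 0 :=
    BenoistAux.sp_nilpotent_eq_zero _ hS' hc
  refine ⟨c, ?_⟩
  have h1 : σ = c • (1 : L →ₗ[K] L) := sub_eq_zero.1 h0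
  rw [h1]
  rfl
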